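/- The stabilizer in SO(3) of the polynomial x³ − 3xy² is a group of order 6, generated by the rotation by angle π about the x-axis and the rotation by angle 2π/3 about the z-axis. -/
import Mathlib


open Matrix Real

/-- Rotation by π about the x-axis. -/
def rotX : Matrix (Fin 3) (Fin 3) ℝ := !![(1:ℝ),0,0; 0,-1,0; 0,0,-1]

/-- Rotation by 2π/3 about the z-axis. -/
noncomputable def rotZ : Matrix (Fin 3) (Fin 3) ℝ :=
  !![Real.cos (2 * π / 3), -Real.sin (2 * π / 3), 0;
     Real.sin (2 * π / 3),  Real.cos (2 * π / 3), 0;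
     0, 0, 1]

private lemma hs3 : Real.sqrt 3 ^ 2 = 3 := Real.sq_sqrt (by norm_num)

private lemma hspos : 0 < Real.sqrt 3 := Real.sqrt_pos.mpr (by norm_num)

private lemma rotZ_eq :
    rotZ = !![-(1/2), -(Real.sqrt 3/2), 0; Real.sqrt 3/2, -(1/2), 0; 0, 0, 1] := by
  have h : (2:ℝ) * π / 3 = π - π/3 := by ring
  have hc : Real.cos (2 * π / 3) = -(1/2) := by
    rw [h, Real.cos_pi_sub, Real.cos_pi_div_three]
  have hs : Real.sin (2 * π / 3) = Real.sqrt 3 / 2 := by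
    rw [h, Real.sin_pi_sub, Real.sin_pi_div_three]
  rw [rotZ, hc, hs]

private lemma rotZZ_eq :
    rotZ * rotZ = !![-(1/2), Real.sqrt 3/2, 0; -(Real.sqrt 3/2), -(1/2), 0; 0, 0, 1] := by
  rw [rotZ_eq]
  ext i j
  fin_cases i <;> fin_cases j <;>
    simp [Matrix.mul_apply, Fin.sum_univ_three] <;>
    (first
      | ring1
      | linear_combination (-(1/4) : ℝ)*hs3
      | linear_combination ((1/4) : ℝ)*hs3)

private lemma rotXZ_eq :
    rotX * rotZ = !![-(1/2), -(Real.sqrt 3/2), 0; -(Real.sqrt 3/2), 1/2, 0; 0, 0, -1] := by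
  rw [rotX, rotZ_eq]
  ext i j
  fin_cases i <;> fin_cases j <;>
    simp [Matrix.mul_apply, Fin.sum_univ_three] <;>
    (first
      | ring1
      | linear_combination (-(1/4) : ℝ)*hs3
      | linear_combination ((1/4) : ℝ)*hs3)

private lemma rotXZZ_eq :
    rotX * rotZ * rotZ = !![-(1/2), Real.sqrt 3/2, 0; Real.sqrt 3/2, 1/2, 0; 0, 0, -1] := by
  rw [rotXZ_eq, rotZ_eq]
  ext i j
  fin_cases i <;> fin_cases j <;>
    simp [Matrix.mul_apply, Fin.sum_univ_three] <;>
    (first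
      | ring1
      | linear_combination (-(1/4) : ℝ)*hs3
      | linear_combination ((1/4) : ℝ)*hs3)

private lemma memForm (a b w : ℝ) (M : Matrix (Fin 3) (Fin 3) ℝ)
    (hM : M = !![a, -(w*b), 0; b, w*a, 0; 0, 0, w])
    (h1 : a^2 + b^2 = 1) (hw : w^2 = 1) (h3 : a^3 - 3*a*b^2 = 1) :
    M * Mᵀ = 1 ∧ M.det = 1 ∧
      ∀ v : Fin 3 → ℝ,
        (M⁻¹.mulVec v 0) ^ 3 - 3 * M⁻¹.mulVec v 0 * (M⁻¹.mulVec v 1) ^ 2 =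
          (v 0) ^ 3 - 3 * v 0 * (v 1) ^ 2 := by
  subst hM
  have hb : 3*a^2*b - b^3 = 0 := by
    have h9 : (3*a^2*b - b^3)^2 = 0 := by
      linear_combination ((a^2+b^2)^2 + (a^2+b^2) + 1) * h1 - (a^3 - 3*a*b^2 + 1) * h3
    exact pow_eq_zero_iff two_ne_zero |>.mp h9
  have hMT : (!![a, -(w*b), 0; b, w*a, 0; 0, 0, w])ᵀ
      = !![a, b, 0; -(w*b), w*a, 0; 0, 0, w] := by
    ext i j; fin_cases i <;> fin_cases j <;> rfl
  have horth : !![a, -(w*b), 0; b, w*a, 0; 0, 0, w]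
      * (!![a, -(w*b), 0; b, w*a, 0; 0, 0, w])ᵀ = 1 := by
    rw [hMT]
    ext i j
    fin_cases i <;> fin_cases j <;>
      simp [Matrix.mul_apply, Fin.sum_univ_three, Matrix.one_apply] <;>
      (first
        | ring1
        | linear_combination hw
        | linear_combination h1 + b^2*hw
        | linear_combination h1 + a^2*hw
        | linear_combination (-(a*b))*hw
        | linear_combination (a*b)*hw)
  refine ⟨horth, ?_, ?_⟩
  · rw [Matrix.det_fin_three]
    simp
    linear_combination w^2*h1 + hw
  · intro v
    have hinv : (!![a, -(w*b), 0; b, w*a, 0; 0, 0, w])⁻¹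
        = (!![a, -(w*b), 0; b, w*a, 0; 0, 0, w])ᵀ := Matrix.inv_eq_right_inv horth
    rw [hinv, hMT]
    simp [Matrix.mulVec, dotProduct, Fin.sum_univ_three]
    linear_combination ((v 0)^3 - 3*(v 0)*(v 1)^2) * h3 + (3*(v 0)^2*(v 1) - (v 1)^3) * hb
      - 3*(a*(v 0)+b*(v 1))*(-(b*(v 0))+a*(v 1))^2 * hw

private lemma scalar_aux (L1 L2 u G : ℝ) (hupos : 0 < u)
    (e1 : L1^3 - 3*L1*L2^2 = u^3)
    (hBval : L1^2 + L2^2 = u^2 - G^2*u) : G = 0 := by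
  have hBpos : (0:ℝ) ≤ L1^2 + L2^2 := by positivity
  have hsq : (L1^3 - 3*L1*L2^2)^2 = u^6 := by rw [e1]; ring
  have h6 : (u^2)^3 ≤ (L1^2+L2^2)^3 := by
    nlinarith [hsq, sq_nonneg (3*L1^2*L2 - L2^3)]
  have hle : u^2 ≤ L1^2 + L2^2 := le_of_pow_le_pow_left₀ (by norm_num) hBpos h6
  have h7 : G^2 * u ≤ 0 := by linarith
  have h8 : 0 ≤ G^2 * u := mul_nonneg (sq_nonneg G) hupos.le
  have hG2 : G^2 = 0 := by
    rcases mul_eq_zero.mp (le_antisymm h7 h8) with h | h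
    · exact h
    · exact absurd h (ne_of_gt hupos)
  exact pow_eq_zero_iff two_ne_zero |>.mp hG2

private lemma aux3 (A : Matrix (Fin 3) (Fin 3) ℝ) (horth : A * Aᵀ = 1)
    (key : ∀ x y z : ℝ,
      (A 0 0*x + A 1 0*y + A 2 0*z)^3
        - 3*(A 0 0*x + A 1 0*y + A 2 0*z)*(A 0 1*x + A 1 1*y + A 2 1*z)^2 = x^3 - 3*x*y^2)
    (x y : ℝ) (hxy : x^2 + y^2 = 1) (hone : x^3 - 3*x*y^2 = 1) :
    A 0 2 * x + A 1 2 * y = 0 := by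
  have hAtA : Aᵀ * A = 1 := mul_eq_one_comm.mp horth
  have hc22 : A 0 2^2 + A 1 2^2 + A 2 2^2 = 1 := by
    have := congrFun (congrFun hAtA 2) 2
    simp [Matrix.mul_apply, Fin.sum_univ_three, Matrix.one_apply] at this
    linear_combination this
  by_cases hw : A 2 2 ^ 2 = 1
  · have h02 : A 0 2 = 0 := by nlinarith [sq_nonneg (A 0 2), sq_nonneg (A 1 2)]
    have h12 : A 1 2 = 0 := by nlinarith [sq_nonneg (A 0 2), sq_nonneg (A 1 2)]
    rw [h02, h12]; ring
  · have hr00 : A 0 0^2 + A 0 1^2 + A 0 2^2 = 1 := by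
      have := congrFun (congrFun horth 0) 0
      simp [Matrix.mul_apply, Fin.sum_univ_three, Matrix.one_apply] at this
      linear_combination this
    have hr11 : A 1 0^2 + A 1 1^2 + A 1 2^2 = 1 := by
      have := congrFun (congrFun horth 1) 1
      simp [Matrix.mul_apply, Fin.sum_univ_three, Matrix.one_apply] at this
      linear_combination this
    have hr22 : A 2 0^2 + A 2 1^2 + A 2 2^2 = 1 := by
      have := congrFun (congrFun horth 2) 2
      simp [Matrix.mul_apply, Fin.sum_univ_three, Matrix.one_apply] at this
      linear_combination this
    have hr01 : A 0 0*A 1 0 + A 0 1*A 1 1 + A 0 2*A 1 2 = 0 := by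
      have := congrFun (congrFun horth 0) 1
      simp [Matrix.mul_apply, Fin.sum_univ_three, Matrix.one_apply] at this
      linear_combination this
    have hr02 : A 0 0*A 2 0 + A 0 1*A 2 1 + A 0 2*A 2 2 = 0 := by
      have := congrFun (congrFun horth 0) 2
      simp [Matrix.mul_apply, Fin.sum_univ_three, Matrix.one_apply] at this
      linear_combination this
    have hr12 : A 1 0*A 2 0 + A 1 1*A 2 1 + A 1 2*A 2 2 = 0 := by
      have := congrFun (congrFun horth 1) 2
      simp [Matrix.mul_apply, Fin.sum_univ_three, Matrix.one_apply] at this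
      linear_combination this
    have hwlt : A 2 2^2 < 1 :=
      lt_of_le_of_ne (by nlinarith [sq_nonneg (A 0 2), sq_nonneg (A 1 2)]) hw
    set u : ℝ := 1 - A 2 2^2 with hu
    have hupos : 0 < u := by rw [hu]; linarith
    set G : ℝ := A 0 2 * x + A 1 2 * y with hG
    set L1 : ℝ := A 0 0*(u*x) + A 1 0*(u*y) + A 2 0*(G*A 2 2) with hL1
    set L2 : ℝ := A 0 1*(u*x) + A 1 1*(u*y) + A 2 1*(G*A 2 2) with hL2
    have e1 : L1^3 - 3*L1*L2^2 = u^3 := by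
      have := key (u*x) (u*y) (G*A 2 2)
      rw [hL1, hL2]
      linear_combination this + u^3 * hone
    have hBval : L1^2 + L2^2 = u^2 - G^2*u := by
      rw [hL1, hL2, hG, hu]
      linear_combination ((1-A 2 2^2)*x)^2*hr00
        + ((1-A 2 2^2)*y)^2*hr11
        + ((A 0 2*x + A 1 2*y)*A 2 2)^2*hr22
        + 2*((1-A 2 2^2)*x)*((1-A 2 2^2)*y)*hr01
        + 2*((1-A 2 2^2)*x)*((A 0 2*x + A 1 2*y)*A 2 2)*hr02
        + 2*((1-A 2 2^2)*y)*((A 0 2*x + A 1 2*y)*A 2 2)*hr12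
        + (1-A 2 2^2)^2*hxy
    exact scalar_aux L1 L2 u G hupos e1 hBval

private lemma ne_ent {M N : Matrix (Fin 3) (Fin 3) ℝ} (i j : Fin 3)
    (h : M i j ≠ N i j) : M ≠ N := fun e => h (by rw [e])

/-- The stabilizer in SO(3) of x³ − 3xy² is the order-6 group generated by the rotation
by π about the x-axis and the rotation by 2π/3 about the z-axis. -/
theorem stabilizer_of_x3_minus_3xy2 :
    ({A : Matrix (Fin 3) (Fin 3) ℝ |
        A * Aᵀ = 1 ∧ A.det = 1 ∧
          ∀ v : Fin 3 → ℝ,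
            (A⁻¹.mulVec v 0) ^ 3 - 3 * A⁻¹.mulVec v 0 * (A⁻¹.mulVec v 1) ^ 2 =
              (v 0) ^ 3 - 3 * v 0 * (v 1) ^ 2} : Set (Matrix (Fin 3) (Fin 3) ℝ)) =
      {1, rotZ, rotZ * rotZ, rotX, rotX * rotZ, rotX * rotZ * rotZ} ∧
    ({1, rotZ, rotZ * rotZ, rotX, rotX * rotZ, rotX * rotZ * rotZ} :
        Set (Matrix (Fin 3) (Fin 3) ℝ)).ncard = 6 := by
  constructor
  · ext A
    simp only [Set.mem_setOf_eq, Set.mem_insert_iff, Set.mem_singleton_iff]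
    constructor
    · rintro ⟨horth, hdet, hp⟩
      have hAinv : A⁻¹ = Aᵀ := Matrix.inv_eq_right_inv horth
      have key : ∀ x y z : ℝ,
          (A 0 0*x + A 1 0*y + A 2 0*z)^3
            - 3*(A 0 0*x + A 1 0*y + A 2 0*z)*(A 0 1*x + A 1 1*y + A 2 1*z)^2
            = x^3 - 3*x*y^2 := by
        intro x y z
        have := hp ![x, y, z]
        rw [hAinv] at this
        simp [Matrix.mulVec, dotProduct, Fin.sum_univ_three] at this
        linear_combination this
      have hAtA : Aᵀ * A = 1 := mul_eq_one_comm.mp horth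
      have hg : A 0 2 = 0 := by
        have := aux3 A horth key 1 0 (by norm_num) (by norm_num)
        linear_combination this
      have hh : A 1 2 = 0 := by
        have e2 := aux3 A horth key (-(1/2)) (Real.sqrt 3/2)
          (by linear_combination (1/4 : ℝ)*hs3) (by linear_combination (3/8 : ℝ)*hs3)
        have h5 : A 1 2 * (Real.sqrt 3/2) = 0 := by
          linear_combination e2 - (-(1/2) : ℝ)*hg
        rcases mul_eq_zero.mp h5 with h | h
        · exact h
        · exfalso; linarith [hspos]
      have hc00 : A 0 0^2 + A 1 0^2 + A 2 0^2 = 1 := by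
        have := congrFun (congrFun hAtA 0) 0
        simp [Matrix.mul_apply, Fin.sum_univ_three, Matrix.one_apply] at this
        linear_combination this
      have hc22 : A 0 2^2 + A 1 2^2 + A 2 2^2 = 1 := by
        have := congrFun (congrFun hAtA 2) 2
        simp [Matrix.mul_apply, Fin.sum_univ_three, Matrix.one_apply] at this
        linear_combination this
      have hc01 : A 0 0*A 0 1 + A 1 0*A 1 1 + A 2 0*A 2 1 = 0 := by
        have := congrFun (congrFun hAtA 0) 1
        simp [Matrix.mul_apply, Fin.sum_univ_three, Matrix.one_apply] at this
        linear_combination this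
      have hc02 : A 0 0*A 0 2 + A 1 0*A 1 2 + A 2 0*A 2 2 = 0 := by
        have := congrFun (congrFun hAtA 0) 2
        simp [Matrix.mul_apply, Fin.sum_univ_three, Matrix.one_apply] at this
        linear_combination this
      have hc12 : A 0 1*A 0 2 + A 1 1*A 1 2 + A 2 1*A 2 2 = 0 := by
        have := congrFun (congrFun hAtA 1) 2
        simp [Matrix.mul_apply, Fin.sum_univ_three, Matrix.one_apply] at this
        linear_combination this
      have hw2 : A 2 2^2 = 1 := by
        linear_combination hc22 - A 0 2*hg - A 1 2*hh
      have hwne : A 2 2 ≠ 0 := by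
        intro h0; rw [h0] at hw2; norm_num at hw2
      have hc0 : A 2 0 = 0 := by
        have h5 : A 2 0 * A 2 2 = 0 := by
          linear_combination hc02 - A 0 0*hg - A 1 0*hh
        rcases mul_eq_zero.mp h5 with h | h
        · exact h
        · exact absurd h hwne
      have hf0 : A 2 1 = 0 := by
        have h5 : A 2 1 * A 2 2 = 0 := by
          linear_combination hc12 - A 0 1*hg - A 1 1*hh
        rcases mul_eq_zero.mp h5 with h | h
        · exact h
        · exact absurd h hwne
      have hab : A 0 0^2 + A 1 0^2 = 1 := by
        linear_combination hc00 - A 2 0*hc0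
      have hadbe : A 0 0*A 0 1 + A 1 0*A 1 1 = 0 := by
        linear_combination hc01 - A 2 0*hf0
      rw [Matrix.det_fin_three] at hdet
      have hdetw : A 2 2*(A 0 0*A 1 1 - A 0 1*A 1 0) = 1 := by
        linear_combination hdet + (A 0 0*A 2 1 - A 0 1*A 2 0)*hh
          - (A 1 0*A 2 1 - A 1 1*A 2 0)*hg
      have hmw : A 0 0*A 1 1 - A 0 1*A 1 0 = A 2 2 := by
        linear_combination A 2 2*hdetw - (A 0 0*A 1 1 - A 0 1*A 1 0)*hw2
      have hd : A 0 1 = -(A 2 2 * A 1 0) := by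
        linear_combination (-(A 0 1))*hab + A 0 0*hadbe - A 1 0*hmw
      have he : A 1 1 = A 2 2 * A 0 0 := by
        linear_combination (-(A 1 1))*hab + A 1 0*hadbe + A 0 0*hmw
      have ha3 : A 0 0^3 - 3*A 0 0*A 1 0^2 = 1 := by
        have k1 := key 1 0 0
        linear_combination k1 + 3*A 0 0*(A 0 1 - A 2 2*A 1 0)*hd + 3*A 0 0*A 1 0^2*hw2
      have hfact : (A 0 0 - 1)*(2*A 0 0 + 1)^2 = 0 := by
        linear_combination ha3 + 3*A 0 0*hab
      have hA9 := Matrix.eta_fin_three A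
      rcases mul_eq_zero.mp hfact with h | h
      · -- A 0 0 = 1
        have ha1 : A 0 0 = 1 := by linarith
        have hb0 : A 1 0 = 0 := by
          have hb2 : A 1 0^2 = 0 := by linear_combination hab - (A 0 0 + 1)*h
          exact pow_eq_zero_iff two_ne_zero |>.mp hb2
        have hd0 : A 0 1 = 0 := by rw [hd, hb0]; ring
        have hww : (A 2 2 - 1)*(A 2 2 + 1) = 0 := by linear_combination hw2
        rcases mul_eq_zero.mp hww with h2 | h2
        · -- w = 1, A = 1
          have hw1 : A 2 2 = 1 := by linarith
          have he1 : A 1 1 = 1 := by rw [he, hw1, ha1]; ring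
          left
          rw [hA9, ha1, hd0, hg, hb0, he1, hh, hc0, hf0, hw1]
          exact Matrix.one_fin_three.symm
        · -- w = -1, A = rotX
          have hw1 : A 2 2 = -1 := by linarith
          have he1 : A 1 1 = -1 := by rw [he, hw1, ha1]; ring
          refine Or.inr (Or.inr (Or.inr (Or.inl ?_)))
          rw [hA9, ha1, hd0, hg, hb0, he1, hh, hc0, hf0, hw1, rotX]
      · -- A 0 0 = -(1/2)
        have ha1 : A 0 0 = -(1/2) := by
          have := pow_eq_zero_iff two_ne_zero |>.mp h
          linarith
        have hb2 : A 1 0^2 = 3/4 := by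
          linear_combination hab - (A 0 0 - 1/2)*ha1
        have hbb : (A 1 0 - Real.sqrt 3/2)*(A 1 0 + Real.sqrt 3/2) = 0 := by
          linear_combination hb2 - (1/4 : ℝ)*hs3
        have hww : (A 2 2 - 1)*(A 2 2 + 1) = 0 := by linear_combination hw2
        rcases mul_eq_zero.mp hbb with hb' | hb' <;> rcases mul_eq_zero.mp hww with h2 | h2
        · -- b = √3/2, w = 1 : rotZ
          have hbv : A 1 0 = Real.sqrt 3/2 := by linarith
          have hw1 : A 2 2 = 1 := by linarith
          have hdv : A 0 1 = -(Real.sqrt 3/2) := by rw [hd, hw1, hbv]; ring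
          have hev : A 1 1 = -(1/2) := by rw [he, hw1, ha1]; ring
          refine Or.inr (Or.inl ?_)
          rw [hA9, ha1, hdv, hg, hbv, hev, hh, hc0, hf0, hw1, rotZ_eq]
        · -- b = √3/2, w = -1 : rotX * rotZ * rotZ
          have hbv : A 1 0 = Real.sqrt 3/2 := by linarith
          have hw1 : A 2 2 = -1 := by linarith
          have hdv : A 0 1 = Real.sqrt 3/2 := by rw [hd, hw1, hbv]; ring
          have hev : A 1 1 = 1/2 := by rw [he, hw1, ha1]; ring
          refine Or.inr (Or.inr (Or.inr (Or.inr (Or.inr ?_))))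
          rw [hA9, ha1, hdv, hg, hbv, hev, hh, hc0, hf0, hw1, rotXZZ_eq]
        · -- b = -(√3/2), w = 1 : rotZ * rotZ
          have hbv : A 1 0 = -(Real.sqrt 3/2) := by linarith
          have hw1 : A 2 2 = 1 := by linarith
          have hdv : A 0 1 = Real.sqrt 3/2 := by rw [hd, hw1, hbv]; ring
          have hev : A 1 1 = -(1/2) := by rw [he, hw1, ha1]; ring
          refine Or.inr (Or.inr (Or.inl ?_))
          rw [hA9, ha1, hdv, hg, hbv, hev, hh, hc0, hf0, hw1, rotZZ_eq]
        · -- b = -(√3/2), w = -1 : rotX * rotZ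
          have hbv : A 1 0 = -(Real.sqrt 3/2) := by linarith
          have hw1 : A 2 2 = -1 := by linarith
          have hdv : A 0 1 = -(Real.sqrt 3/2) := by rw [hd, hw1, hbv]; ring
          have hev : A 1 1 = 1/2 := by rw [he, hw1, ha1]; ring
          refine Or.inr (Or.inr (Or.inr (Or.inr (Or.inl ?_))))
          rw [hA9, ha1, hdv, hg, hbv, hev, hh, hc0, hf0, hw1, rotXZ_eq]
    · rintro (rfl | rfl | rfl | rfl | rfl | rfl)
      · exact memForm 1 0 1 _ (by rw [Matrix.one_fin_three]; norm_num)
          (by norm_num) (by norm_num) (by norm_num)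
      · exact memForm (-(1/2)) (Real.sqrt 3/2) 1 _
          (by rw [rotZ_eq]; norm_num)
          (by linear_combination (1/4 : ℝ)*hs3) (by norm_num)
          (by linear_combination (3/8 : ℝ)*hs3)
      · exact memForm (-(1/2)) (-(Real.sqrt 3/2)) 1 _
          (by rw [rotZZ_eq]; norm_num)
          (by linear_combination (1/4 : ℝ)*hs3) (by norm_num)
          (by linear_combination (3/8 : ℝ)*hs3)
      · exact memForm 1 0 (-1) _ (by rw [rotX]; norm_num)
          (by norm_num) (by norm_num) (by norm_num)
      · exact memForm (-(1/2)) (-(Real.sqrt 3/2)) (-1) _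
          (by rw [rotXZ_eq]; norm_num)
          (by linear_combination (1/4 : ℝ)*hs3) (by norm_num)
          (by linear_combination (3/8 : ℝ)*hs3)
      · exact memForm (-(1/2)) (Real.sqrt 3/2) (-1) _
          (by rw [rotXZZ_eq]; norm_num)
          (by linear_combination (1/4 : ℝ)*hs3) (by norm_num)
          (by linear_combination (3/8 : ℝ)*hs3)
  · -- cardinality
    have n1 : (1 : Matrix (Fin 3) (Fin 3) ℝ) ∉
        ({rotZ, rotZ * rotZ, rotX, rotX * rotZ, rotX * rotZ * rotZ} :
          Set (Matrix (Fin 3) (Fin 3) ℝ)) := by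
      simp only [Set.mem_insert_iff, Set.mem_singleton_iff, not_or]
      refine ⟨?_, ?_, ?_, ?_, ?_⟩
      · exact ne_ent 0 0 (by rw [rotZ_eq]; simp [Matrix.one_apply]; norm_num)
      · exact ne_ent 0 0 (by rw [rotZZ_eq]; simp [Matrix.one_apply]; norm_num)
      · exact ne_ent 2 2 (by rw [rotX]; simp [Matrix.one_apply]; norm_num)
      · exact ne_ent 2 2 (by rw [rotXZ_eq]; simp [Matrix.one_apply]; norm_num)
      · exact ne_ent 2 2 (by rw [rotXZZ_eq]; simp [Matrix.one_apply]; norm_num)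
    have n2 : rotZ ∉ ({rotZ * rotZ, rotX, rotX * rotZ, rotX * rotZ * rotZ} :
        Set (Matrix (Fin 3) (Fin 3) ℝ)) := by
      simp only [Set.mem_insert_iff, Set.mem_singleton_iff, not_or]
      refine ⟨?_, ?_, ?_, ?_⟩
      · exact ne_ent 1 0 (by rw [rotZZ_eq, rotZ_eq]; simp; intro h; linarith [hspos])
      · exact ne_ent 2 2 (by rw [rotX, rotZ_eq]; simp; norm_num)
      · exact ne_ent 2 2 (by rw [rotXZ_eq, rotZ_eq]; simp; norm_num)
      · exact ne_ent 2 2 (by rw [rotXZZ_eq, rotZ_eq]; simp; norm_num)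
    have n3 : rotZ * rotZ ∉ ({rotX, rotX * rotZ, rotX * rotZ * rotZ} :
        Set (Matrix (Fin 3) (Fin 3) ℝ)) := by
      simp only [Set.mem_insert_iff, Set.mem_singleton_iff, not_or]
      refine ⟨?_, ?_, ?_⟩
      · exact ne_ent 2 2 (by rw [rotZZ_eq, rotX]; simp; norm_num)
      · exact ne_ent 2 2 (by rw [rotXZ_eq, rotZZ_eq]; simp; norm_num)
      · exact ne_ent 2 2 (by rw [rotXZZ_eq, rotZZ_eq]; simp; norm_num)
    have n4 : rotX ∉ ({rotX * rotZ, rotX * rotZ * rotZ} :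
        Set (Matrix (Fin 3) (Fin 3) ℝ)) := by
      simp only [Set.mem_insert_iff, Set.mem_singleton_iff, not_or]
      refine ⟨?_, ?_⟩
      · exact ne_ent 0 0 (by rw [rotXZ_eq, rotX]; simp; norm_num)
      · exact ne_ent 0 0 (by rw [rotXZZ_eq, rotX]; simp; norm_num)
    have n5 : rotX * rotZ ∉ ({rotX * rotZ * rotZ} :
        Set (Matrix (Fin 3) (Fin 3) ℝ)) := by
      simp only [Set.mem_singleton_iff]
      exact ne_ent 0 1 (by rw [rotXZZ_eq, rotXZ_eq]; simp; intro h; linarith [hspos])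
    rw [Set.ncard_insert_of_notMem n1 (Set.toFinite _),
      Set.ncard_insert_of_notMem n2 (Set.toFinite _),
      Set.ncard_insert_of_notMem n3 (Set.toFinite _),
      Set.ncard_insert_of_notMem n4 (Set.toFinite _),
      Set.ncard_insert_of_notMem n5 (Set.toFinite _),
      Set.ncard_singleton]
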